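/- Let C : ℕ → ℝ be a sequence with C(0) = 0 such that for every z ∈ (0,1/4) the series ∑_{p≥1} C(p)·z^p converges with sum (3/2)·z/√(π·(1-z)·(1-4z)³). Then for every x ∈ (0,1), the series ∑_{k≥1} (2√π·4^{-k}·C(k)/k)·x^k converges with sum √((4-x)/(1-x)) - 2. -/

import Mathlib

open Set Real Filter

lemma aux_cancel {p X : ℝ} (hp : 0 < p) (hX : 0 < X) :
    p * ((3/2) / (p * X)) = (3/2) / X := by
  field_simp

-- auxiliary: derivative of sqrt((1-t)/(1-4t))
lemma aux_deriv_g {t : ℝ} (ht0 : 0 ≤ t) (ht : t < 1/4) :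
    HasDerivAt (fun s : ℝ => Real.sqrt ((1 - s) / (1 - 4 * s)))
      ((3/2) / (Real.sqrt (1 - t) * Real.sqrt ((1 - 4*t)^3))) t := by
  have hB : (0:ℝ) < 1 - 4*t := by linarith
  have hA : (0:ℝ) < 1 - t := by linarith
  have h1 : HasDerivAt (fun s : ℝ => 1 - s) (-1) t := by
    simpa using (hasDerivAt_id t).const_sub 1
  have h2 : HasDerivAt (fun s : ℝ => 1 - 4*s) (-4) t := by
    simpa using ((hasDerivAt_id t).const_mul (4:ℝ)).const_sub 1
  have hq : HasDerivAt (fun s : ℝ => (1 - s) / (1 - 4*s))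
      ((-1 * (1 - 4*t) - (1 - t) * (-4)) / (1 - 4*t)^2) t := h1.div h2 hB.ne'
  have hqpos : (0:ℝ) < (1 - t) / (1 - 4*t) := div_pos hA hB
  have hs := hq.sqrt hqpos.ne'
  convert hs using 1
  have hsq : Real.sqrt ((1 - t) / (1 - 4*t)) = Real.sqrt (1-t) / Real.sqrt (1-4*t) :=
    Real.sqrt_div hA.le _
  have h3 : Real.sqrt ((1-4*t)^3) = (1-4*t) * Real.sqrt (1-4*t) := by
    rw [pow_succ, Real.sqrt_mul (by positivity), Real.sqrt_sq hB.le]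
  rw [hsq, h3]
  have hsA : Real.sqrt (1-t) > 0 := Real.sqrt_pos.2 hA
  have hsB : Real.sqrt (1-4*t) > 0 := Real.sqrt_pos.2 hB
  have hBB : Real.sqrt (1-4*t) * Real.sqrt (1-4*t) = 1-4*t := Real.mul_self_sqrt hB.le
  field_simp
  have hBB2 : Real.sqrt (1 - t*4)^2 = 1 - t*4 := Real.sq_sqrt (by linarith)
  have hB' : (0:ℝ) < 1 - t*4 := by linarith
  have hsB' : (0:ℝ) < Real.sqrt (1 - t*4) := Real.sqrt_pos.2 hB'
  rw [div_eq_div_iff (mul_pos hB' hsB').ne' (pow_pos hB' 2).ne']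
  linear_combination (-3*(1-t*4)) * hBB2

set_option maxHeartbeats 2000000 in
theorem stmt_8 (C : ℕ → ℝ) (hC0 : C 0 = 0)
    (hgen : ∀ z ∈ Set.Ioo (0 : ℝ) (1 / 4),
      HasSum (fun p : ℕ => C p * z ^ p)
        ((3 / 2) * z / Real.sqrt (Real.pi * (1 - z) * (1 - 4 * z) ^ 3))) :
    ∀ x ∈ Set.Ioo (0 : ℝ) 1,
      HasSum (fun k : ℕ => 2 * Real.sqrt Real.pi * (4 : ℝ) ^ (-(k : ℤ)) * C k / k * x ^ k)
        (Real.sqrt ((4 - x) / (1 - x)) - 2) := by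
  intro x hx
  obtain ⟨hx0, hx1⟩ := hx
  set z : ℝ := x / 4 with hzdef
  have hz0 : 0 < z := by positivity
  have hz14 : z < 1/4 := by rw [hzdef]; linarith
  set b : ℝ := 3*z/4 + 1/16 with hbdef
  set c : ℝ := z/2 + 1/8 with hcdef
  have hzb : z < b := by rw [hbdef]; linarith
  have hbc : b < c := by rw [hbdef, hcdef]; linarith
  have hc14 : c < 1/4 := by rw [hcdef]; linarith
  have hb0 : 0 < b := by rw [hbdef]; linarith
  have hc0 : 0 < c := by rw [hcdef]; linarith
  -- bound on coefficients from summability at c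
  have hsumc : Summable (fun p : ℕ => C p * c ^ p) := (hgen c ⟨hc0, hc14⟩).summable
  obtain ⟨M, hM⟩ : ∃ M : ℝ, ∀ k : ℕ, |C k * c ^ k| ≤ M := by
    have h0 := hsumc.tendsto_atTop_zero.abs
    obtain ⟨M, hM⟩ := h0.bddAbove_range
    exact ⟨M, fun k => hM ⟨k, rfl⟩⟩
  have hM0 : 0 ≤ M := le_trans (abs_nonneg _) (hM 0)
  set r : ℝ := b / c with hrdef
  have hr0 : 0 < r := div_pos hb0 hc0
  have hr1 : r < 1 := (div_lt_one hc0).2 hbc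
  -- the series and its derivative series
  set g : ℕ → ℝ → ℝ := fun n t => C n / n * t ^ n with hgdef
  set g' : ℕ → ℝ → ℝ := fun n t => C n * t ^ (n - 1) with hg'def
  set u : ℕ → ℝ := fun n => M / c * r⁻¹ * r ^ n with hudef
  have hu : Summable u := ((summable_geometric_of_lt_one hr0.le hr1).mul_left _)
  set s : Set ℝ := Set.Ioo (-b) b with hsdef
  have hs_open : IsOpen s := isOpen_Ioo
  have hs_conn : IsPreconnected s := (convex_Ioo _ _).isPreconnected
  have h0s : (0:ℝ) ∈ s := ⟨by linarith, hb0⟩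
  -- derivative of each term
  have hg : ∀ n : ℕ, ∀ t : ℝ, t ∈ s → HasDerivAt (g n) (g' n t) t := by
    intro n t _
    match n with
    | 0 =>
      simp only [hgdef, hg'def, hC0, Nat.cast_zero, div_zero, zero_mul, pow_zero, zero_div]
      exact hasDerivAt_const t 0
    | n + 1 =>
      have h := (hasDerivAt_pow (n+1) t).const_mul (C (n+1) / (n+1 : ℕ))
      refine h.congr_deriv ?_
      simp only [hg'def, Nat.add_sub_cancel, Nat.cast_add, Nat.cast_one]
      field_simp
  -- bound on derivatives
  have hg' : ∀ n : ℕ, ∀ t : ℝ, t ∈ s → ‖g' n t‖ ≤ u n := by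
    intro n t ht
    have habs : |t| ≤ b := by
      rw [abs_le]; exact ⟨ht.1.le, ht.2.le⟩
    match n with
    | 0 =>
      simp only [hg'def, hudef, hC0, zero_mul, norm_zero, pow_zero, mul_one]
      positivity
    | n + 1 =>
      have hCk : |C (n+1)| ≤ M / c ^ (n+1) := by
        rw [le_div_iff₀ (by positivity)]
        calc |C (n+1)| * c ^ (n+1) = |C (n+1) * c ^ (n+1)| := by
              rw [abs_mul, abs_of_nonneg (by positivity : (0:ℝ) ≤ c ^ (n+1))]
          _ ≤ M := hM (n+1)
      have : ‖g' (n+1) t‖ = |C (n+1)| * |t| ^ n := by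
        simp only [hg'def, Nat.add_sub_cancel, Real.norm_eq_abs, abs_mul, abs_pow]
      rw [this]
      calc |C (n+1)| * |t| ^ n ≤ (M / c ^ (n+1)) * b ^ n := by
            apply mul_le_mul hCk (pow_le_pow_left₀ (abs_nonneg _) habs n)
              (by positivity) (by positivity)
        _ = u (n+1) := by
            simp only [hudef, hrdef]
            rw [div_pow, pow_succ]
            field_simp
            ring
  -- summability at 0
  have hg0 : Summable (fun n => g n 0) := by
    apply summable_zero.congr
    intro n
    match n with
    | 0 => simp [hgdef, hC0]
    | n + 1 => simp [hgdef]
  -- the sum function H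
  set H : ℝ → ℝ := fun t => ∑' n, g n t with hHdef
  have hHderiv : ∀ t ∈ s, HasDerivAt H (∑' n, g' n t) t := fun t ht =>
    hasDerivAt_tsum_of_isPreconnected hu hs_open hs_conn hg hg' h0s hg0 ht
  have hHsummable : ∀ t ∈ s, Summable (fun n => g n t) := fun t ht =>
    summable_of_summable_hasDerivAt_of_isPreconnected hu hs_open hs_conn hg hg' h0s hg0 ht
  clear_value g g' u H
  -- identify derivative series on (0, b)
  have hderiv_eq : ∀ t : ℝ, t ∈ Set.Ioo (0:ℝ) b →
      (∑' n, g' n t) = (3/2) / (Real.sqrt Real.pi * (Real.sqrt (1 - t) * Real.sqrt ((1 - 4*t)^3))) := by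
    intro t ⟨ht0, htb⟩
    have ht14 : t < 1/4 := htb.trans (hbc.trans hc14)
    have hA : (0:ℝ) < 1 - t := by linarith
    have hB : (0:ℝ) < 1 - 4*t := by linarith
    have hS : (0:ℝ) < Real.sqrt (Real.pi * (1 - t) * (1 - 4 * t) ^ 3) := by
      apply Real.sqrt_pos.2; positivity
    have h1 := (hgen t ⟨ht0, ht14⟩).mul_right t⁻¹
    have hfun : (fun i : ℕ => C i * t ^ i * t⁻¹) = fun n => g' n t := by
      funext n
      match n with
      | 0 => simp [hg'def, hC0]
      | n + 1 =>
        simp only [hg'def, Nat.add_sub_cancel, pow_succ, mul_assoc]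
        rw [mul_inv_cancel₀ ht0.ne', mul_one]
    rw [hfun] at h1
    have h2 := h1
    have h3 : (3 / 2) * t / Real.sqrt (Real.pi * (1 - t) * (1 - 4 * t) ^ 3) * t⁻¹
        = (3/2) / (Real.sqrt Real.pi * (Real.sqrt (1 - t) * Real.sqrt ((1 - 4*t)^3))) := by
      rw [show Real.pi * (1 - t) * (1 - 4 * t) ^ 3 = Real.pi * ((1-t) * (1-4*t)^3) by ring,
        Real.sqrt_mul Real.pi_pos.le, Real.sqrt_mul hA.le]
      have hP : (0:ℝ) < Real.sqrt Real.pi := Real.sqrt_pos.2 Real.pi_pos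
      field_simp
    rw [← h3]
    exact h2.tsum_eq
  -- comparison function
  set G : ℝ → ℝ := fun t => Real.sqrt ((1 - t) / (1 - 4 * t)) with hGdef
  have hcommon : ∀ t : ℝ, t ∈ Set.Ioo (0:ℝ) b →
      HasDerivAt (fun t => Real.sqrt Real.pi * H t)
        ((3/2) / (Real.sqrt (1 - t) * Real.sqrt ((1 - 4*t)^3))) t := by
    intro t ht
    have hts : t ∈ s := ⟨by linarith [ht.1, hb0], ht.2⟩
    have h := (hHderiv t hts).const_mul (Real.sqrt Real.pi)
    rw [hderiv_eq t ht] at h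
    refine h.congr_deriv ?_
    have ht14 : t < 1/4 := ht.2.trans (hbc.trans hc14)
    have hP : (0:ℝ) < Real.sqrt Real.pi := Real.sqrt_pos.2 Real.pi_pos
    have hA : (0:ℝ) < Real.sqrt (1 - t) := Real.sqrt_pos.2 (by linarith)
    have hB : (0:ℝ) < Real.sqrt ((1 - 4*t)^3) := Real.sqrt_pos.2 (pow_pos (by linarith) 3)
    exact aux_cancel hP (mul_pos hA hB)
  have hzIccs : Set.Icc (0:ℝ) z ⊆ s := by
    intro t ht
    exact ⟨by linarith [ht.1, hb0], lt_of_le_of_lt ht.2 hzb⟩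
  have hHcont : ContinuousOn (fun t => Real.sqrt Real.pi * H t) (Set.Icc (0:ℝ) z) := by
    intro t ht
    exact ((hHderiv t (hzIccs ht)).const_mul (Real.sqrt Real.pi)).continuousAt.continuousWithinAt
  have hGcont : ContinuousOn G (Set.Icc (0:ℝ) z) := by
    intro t ht
    exact (aux_deriv_g ht.1 (lt_of_le_of_lt ht.2 hz14)).continuousAt.continuousWithinAt
  -- for every a in (0,z), the two functions differ by a constant
  have hstep : ∀ a ∈ Set.Ioo (0:ℝ) z,
      Real.sqrt Real.pi * H z = G z + (Real.sqrt Real.pi * H a - G a) := by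
    intro a ha
    have haz : a ≤ z := ha.2.le
    have hsub : Set.Icc a z ⊆ Set.Icc (0:ℝ) z := Set.Icc_subset_Icc ha.1.le le_rfl
    have key := eq_of_has_deriv_right_eq
      (f := fun t => Real.sqrt Real.pi * H t)
      (f' := fun t => (3/2) / (Real.sqrt (1 - t) * Real.sqrt ((1 - 4*t)^3)))
      (g := fun t => G t + (Real.sqrt Real.pi * H a - G a))
      (a := a) (b := z)
      (fun y hy => (hcommon y ⟨lt_of_lt_of_le ha.1 hy.1, hy.2.trans hzb⟩).hasDerivWithinAt)
      (fun y hy => by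
        have h0y : (0:ℝ) ≤ y := le_trans ha.1.le hy.1
        have hy14 : y < 1/4 := lt_trans hy.2 hz14
        exact ((aux_deriv_g h0y hy14).add_const _).hasDerivWithinAt)
      (hHcont.mono hsub)
      ((hGcont.mono hsub).add continuousOn_const)
      (by ring)
    have := key z (Set.right_mem_Icc.2 haz)
    simpa using this
  -- take the limit a → 0⁺
  have hH0 : H 0 = 0 := by
    have hzero : (fun n : ℕ => g n 0) = fun _ => (0:ℝ) := by
      funext n
      match n with
      | 0 => simp [hgdef, hC0]
      | n + 1 => simp [hgdef]
    simp only [hHdef]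
    rw [hzero, tsum_zero]
  have hG0 : G 0 = 1 := by simp [hGdef]
  have hkey : Real.sqrt Real.pi * H z = G z - 1 := by
    set φ : ℝ → ℝ := fun a => Real.sqrt Real.pi * H a - G a with hφdef
    have hφ0 : ContinuousAt φ 0 := by
      have h1 : ContinuousAt H 0 := (hHderiv 0 h0s).continuousAt
      have h2 : ContinuousAt G 0 := (aux_deriv_g le_rfl (by norm_num)).continuousAt
      exact (continuousAt_const.mul h1).sub h2
    have hmem : Set.Ioo (0:ℝ) z ∈ nhdsWithin (0:ℝ) (Set.Ioi 0) :=
      Ioo_mem_nhdsGT hz0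
    have hev : ∀ᶠ a in nhdsWithin (0:ℝ) (Set.Ioi 0),
        φ a = Real.sqrt Real.pi * H z - G z := by
      filter_upwards [hmem] with a ha
      have := hstep a ha
      simp only [hφdef]
      linarith [this]
    have hlim1 : Filter.Tendsto φ (nhdsWithin (0:ℝ) (Set.Ioi 0)) (nhds (φ 0)) :=
      (hφ0.tendsto).mono_left nhdsWithin_le_nhds
    have hlim2 : Filter.Tendsto φ (nhdsWithin (0:ℝ) (Set.Ioi 0))
        (nhds (Real.sqrt Real.pi * H z - G z)) :=
      Filter.Tendsto.congr' (hev.mono fun a ha => ha.symm) tendsto_const_nhds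
    have := tendsto_nhds_unique hlim1 hlim2
    have hφ0val : φ 0 = -1 := by simp [hφdef, hH0, hG0]
    rw [hφ0val] at this
    linarith [this]
  -- conclude
  have hzs : z ∈ s := ⟨by linarith, hzb⟩
  have hsum : HasSum (fun n => g n z) (H z) := by
    simp only [hHdef]
    exact (hHsummable z hzs).hasSum
  have final := hsum.mul_left (2 * Real.sqrt Real.pi)
  have hx4 : x = 4 * z := by rw [hzdef]; ring
  have hfeq : (fun k : ℕ => 2 * Real.sqrt Real.pi * (4 : ℝ) ^ (-(k : ℤ)) * C k / k * x ^ k)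
      = fun k : ℕ => 2 * Real.sqrt Real.pi * g k z := by
    funext k
    have h4k : ((4:ℝ) ^ k)⁻¹ * 4 ^ k = 1 := inv_mul_cancel₀ (by positivity)
    rw [zpow_neg, zpow_natCast, hx4, mul_pow]
    calc 2 * Real.sqrt Real.pi * ((4:ℝ) ^ k)⁻¹ * C k / k * (4 ^ k * z ^ k)
        = 2 * Real.sqrt Real.pi * (C k / k * z ^ k) * (((4:ℝ) ^ k)⁻¹ * 4 ^ k) := by ring
      _ = 2 * Real.sqrt Real.pi * g k z := by rw [h4k, mul_one]; simp only [hgdef]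
  have hval : 2 * Real.sqrt Real.pi * H z = Real.sqrt ((4 - x) / (1 - x)) - 2 := by
    have harg : (4 - x) / (1 - x) = 4 * ((1 - z) / (1 - 4 * z)) := by
      rw [hx4]
      rw [show (4:ℝ) - 4 * z = 4 * (1 - z) by ring, mul_div_assoc]
    have h4 : Real.sqrt (4:ℝ) = 2 := by
      rw [show (4:ℝ) = 2^2 by norm_num, Real.sqrt_sq (by norm_num : (0:ℝ) ≤ 2)]
    rw [harg, Real.sqrt_mul (by norm_num : (0:ℝ) ≤ 4), h4]
    have : Real.sqrt ((1 - z) / (1 - 4 * z)) = G z := by rw [hGdef]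
    rw [this]
    linarith [hkey]
  rw [hfeq, ← hval]
  exact final
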